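/- Let G be a finite simple connected graph that is λ''-connected, super-λ', and edge-regular (every edge of G has edge-degree equal to ξ(G)). Then ρ'(G) ≥ min{λ''(G) − ξ(G), δ(G) − 1}, where δ(G) is the minimum degree of G. -/
import Mathlib


open SimpleGraph

variable {V : Type*}

/-- The degree of a vertex, as the cardinality of its neighbor set. -/
noncomputable def degN (G : SimpleGraph V) (v : V) : ℕ := (G.neighborSet v).ncard

/-- The minimum degree `δ(G)`. -/
noncomputable def minDeg (G : SimpleGraph V) : ℕ := sInf {k | ∃ v, degN G v = k}

/-- `d_G(X)`: the number of edges of `G` with exactly one endpoint in `X`. -/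
noncomputable def dOut (G : SimpleGraph V) (X : Set V) : ℕ :=
  {e ∈ G.edgeSet | ∃ x ∈ X, ∃ y ∈ Xᶜ, e = s(x, y)}.ncard

/-- `F` is an `h`-extra edge-cut of `G`: a set of edges of `G` whose removal disconnects `G`
and such that every connected component of `G - F` has more than `h` vertices. -/
def IsExtraEdgeCut (G : SimpleGraph V) (h : ℕ) (F : Set (Sym2 V)) : Prop :=
  F ⊆ G.edgeSet ∧ ¬(G.deleteEdges F).Connected ∧
    ∀ c : (G.deleteEdges F).ConnectedComponent, h < c.supp.ncard

/-- `G` is `λ^(h)`-connected: an `h`-extra edge-cut exists. -/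
def LambdaConn (G : SimpleGraph V) (h : ℕ) : Prop := ∃ F, IsExtraEdgeCut G h F

/-- The `h`-extra edge-connectivity `λ^(h)(G)`: the minimum cardinality of an
`h`-extra edge-cut. -/
noncomputable def lambdaH (G : SimpleGraph V) (h : ℕ) : ℕ :=
  sInf {k | ∃ F, IsExtraEdgeCut G h F ∧ F.ncard = k}

/-- `ξ_h(G)`: the minimum of `d_G(X)` over vertex sets `X` of size `h + 1` inducing a
connected subgraph. -/
noncomputable def xiH (G : SimpleGraph V) (h : ℕ) : ℕ :=
  sInf {k | ∃ X : Set V, X.ncard = h + 1 ∧ (G.induce X).Connected ∧ dOut G X = k}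

/-- `G` is super-`λ^(h)`: it is connected, `λ^(h)`-connected, `λ^(h)`-optimal
(`λ^(h)(G) = ξ_h(G)`), and every minimum `h`-extra edge-cut leaves a component with
exactly `h + 1` vertices. -/
def SuperLambda (G : SimpleGraph V) (h : ℕ) : Prop :=
  G.Connected ∧ LambdaConn G h ∧ lambdaH G h = xiH G h ∧
    ∀ F : Set (Sym2 V), IsExtraEdgeCut G h F → F.ncard = lambdaH G h →
      ∃ c : (G.deleteEdges F).ConnectedComponent, c.supp.ncard = h + 1

/-- The persistence `ρ^(h)(G)`: the largest `m` such that `G - F` is super-`λ^(h)` for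
every set `F` of at most `m` edges of `G`. -/
noncomputable def rhoH (G : SimpleGraph V) (h : ℕ) : ℕ :=
  sSup {m : ℕ | ∀ F : Set (Sym2 V), F ⊆ G.edgeSet → F.ncard ≤ m →
    SuperLambda (G.deleteEdges F) h}

/-- `ξ(G)`: the minimum edge-degree `deg x + deg y - 2` over the edges `xy` of `G`. -/
noncomputable def xiEdge (G : SimpleGraph V) : ℕ :=
  sInf {k | ∃ x y, G.Adj x y ∧ degN G x + degN G y - 2 = k}

/-- `η(G)`: the number of edges of `G` whose edge-degree equals `ξ(G)`. -/
noncomputable def eta (G : SimpleGraph V) : ℕ :=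
  {e ∈ G.edgeSet | ∃ x y, e = s(x, y) ∧ degN G x + degN G y - 2 = xiEdge G}.ncard

section Helpers

set_option linter.unusedSectionVars false

variable {G : SimpleGraph V} {X S : Set V} {F : Set (Sym2 V)} {a b v w x y : V}

/-- The boundary edge set of `X`. -/
def SLbd (G : SimpleGraph V) (X : Set V) : Set (Sym2 V) :=
  {e ∈ G.edgeSet | ∃ x ∈ X, ∃ y ∈ Xᶜ, e = s(x, y)}

lemma dOut_eq_bd (G : SimpleGraph V) (X : Set V) : dOut G X = (SLbd G X).ncard := rfl

lemma adj_mem_bd (h : G.Adj a b) (ha : a ∈ X) (hb : b ∉ X) : s(a, b) ∈ SLbd G X :=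
  ⟨h, a, ha, b, hb, rfl⟩

lemma bd_cases (he : e ∈ SLbd G X) : ∃ a b, a ∈ X ∧ b ∉ X ∧ G.Adj a b ∧ e = s(a, b) := by
  obtain ⟨hE, p, hp, q, hq, rfl⟩ := he
  exact ⟨p, q, hp, hq, hE, rfl⟩

lemma notMem_bd_of_both (ha : a ∈ X) (hb : b ∈ X) : s(a, b) ∉ SLbd G X := by
  rintro ⟨-, p, hp, q, hq, hpq⟩
  rw [Sym2.eq_iff] at hpq
  rcases hpq with ⟨rfl, rfl⟩ | ⟨rfl, rfl⟩
  · exact hq hb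
  · exact hq ha

lemma notMem_bd_of_neither (ha : a ∉ X) (hb : b ∉ X) : s(a, b) ∉ SLbd G X := by
  rintro ⟨-, p, hp, q, hq, hpq⟩
  rw [Sym2.eq_iff] at hpq
  rcases hpq with ⟨rfl, rfl⟩ | ⟨rfl, rfl⟩
  · exact ha hp
  · exact hb hp

lemma del_bd_closed (h : (G.deleteEdges (SLbd G S)).Adj a b) (ha : a ∈ S) : b ∈ S := by
  rw [deleteEdges_adj] at h
  by_contra hb
  exact h.2 (adj_mem_bd h.1 ha hb)

lemma del_anti {F₁ F₂ : Set (Sym2 V)} (h : F₁ ⊆ F₂) : G.deleteEdges F₂ ≤ G.deleteEdges F₁ := by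
  intro a b hab
  rw [deleteEdges_adj] at *
  exact ⟨hab.1, fun hm => hab.2 (h hm)⟩

lemma mem_supp_self (G : SimpleGraph V) (v : V) : v ∈ (G.connectedComponentMk v).supp := by
  rw [ConnectedComponent.mem_supp_iff]

lemma supp_closed {c : G.ConnectedComponent} (hv : v ∈ c.supp) (ha : G.Adj v w) :
    w ∈ c.supp := by
  rw [ConnectedComponent.mem_supp_iff] at *
  rw [← hv]
  exact ConnectedComponent.sound ha.symm.reachable

lemma reachable_supp {c : G.ConnectedComponent} (hv : v ∈ c.supp) (hr : G.Reachable v w) :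
    w ∈ c.supp := by
  rw [ConnectedComponent.mem_supp_iff] at *
  rw [← hv]
  exact ConnectedComponent.sound hr.symm

lemma mem_supp_of_reachable (h : G.Reachable v w) : w ∈ (G.connectedComponentMk v).supp :=
  reachable_supp (mem_supp_self G v) h

lemma reachable_of_mem_supp (h : w ∈ (G.connectedComponentMk v).supp) : G.Reachable v w := by
  rw [ConnectedComponent.mem_supp_iff] at h
  exact (ConnectedComponent.exact h).symm

lemma supp_subset_of_le {G₁ G₂ : SimpleGraph V} (h : G₁ ≤ G₂) (v : V) :
    (G₁.connectedComponentMk v).supp ⊆ (G₂.connectedComponentMk v).supp := by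
  intro w hw
  exact mem_supp_of_reachable ((reachable_of_mem_supp hw).mono h)

lemma closed_walk_mem {S : Set V} (hcl : ∀ a b, G.Adj a b → a ∈ S → b ∈ S)
    (hv : v ∈ S) (hr : G.Reachable v w) : w ∈ S := by
  obtain ⟨p⟩ := hr
  induction p with
  | nil => exact hv
  | cons h p ih => exact ih (hcl _ _ h hv)

lemma comp_supp_eq_of_closed (hv : v ∈ S) (hcl : ∀ a b, G.Adj a b → a ∈ S → b ∈ S)
    (hre : ∀ w ∈ S, G.Reachable v w) : (G.connectedComponentMk v).supp = S := by
  ext w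
  constructor
  · intro hw
    exact closed_walk_mem hcl hv (reachable_of_mem_supp hw)
  · intro hw
    exact mem_supp_of_reachable (hre w hw)

lemma first_step (h : G.Reachable v w) (hne : v ≠ w) : ∃ u, G.Adj v u ∧ G.Reachable u w := by
  obtain ⟨p⟩ := h
  cases p with
  | nil => exact absurd rfl hne
  | cons h p => exact ⟨_, h, ⟨p⟩⟩

lemma not_connected_of_not_reachable (h : ¬ G.Reachable v w) : ¬ G.Connected := by
  intro hc
  exact h (hc.preconnected v w)

lemma exists_not_reachable (h : ¬ G.Connected) (hne : Nonempty V) :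
    ∃ v w, ¬ G.Reachable v w := by
  by_contra hx
  push_neg at hx
  exact h ((connected_iff G).mpr ⟨fun v w => hx v w, hne⟩)

lemma adj_of_supp_pair (h : (G.connectedComponentMk v).supp = {v, w}) (hne : v ≠ w) :
    G.Adj v w := by
  have hw : w ∈ (G.connectedComponentMk v).supp := by rw [h]; right; rfl
  obtain ⟨u, hu, -⟩ := first_step (reachable_of_mem_supp hw) hne
  have : u ∈ (G.connectedComponentMk v).supp := supp_closed (mem_supp_self G v) hu
  rw [h] at this
  rcases this with rfl | rfl
  · exact absurd rfl hu.ne'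
  · exact hu

lemma two_le_ncard_of_mem {α : Type*} [Fintype α] {S : Set α} {a b : α}
    (ha : a ∈ S) (hb : b ∈ S) (hne : a ≠ b) : 2 ≤ S.ncard := by
  have := (Set.one_lt_ncard (Set.toFinite S)).mpr ⟨a, ha, b, hb, hne⟩
  omega

lemma exists_notMem_of_ncard_lt [Fintype V] {S : Set V} (h : S.ncard < (Set.univ : Set V).ncard) :
    ∃ v, v ∉ S := by
  by_contra hx
  push_neg at hx
  have : S = Set.univ := Set.eq_univ_of_forall hx
  rw [this] at h
  exact lt_irrefl _ h

lemma neighborSet_del (G : SimpleGraph V) (F : Set (Sym2 V)) (v : V) :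
    (G.deleteEdges F).neighborSet v = G.neighborSet v \ {z | s(v, z) ∈ F} := by
  ext z
  simp [mem_neighborSet, deleteEdges_adj]

lemma sym2_left_injective (v : V) : Function.Injective (fun z => s(v, z)) := by
  intro a b h
  exact Sym2.congr_right.mp h

lemma ncard_le_of_image_subset [Fintype V] {D : Set V} (h : (fun z => s(v, z)) '' D ⊆ F) :
    D.ncard ≤ F.ncard := by
  rw [← Set.ncard_image_of_injOn (Function.Injective.injOn (sym2_left_injective v))]
  exact Set.ncard_le_ncard h (Set.toFinite F)

lemma degN_del_ge [Fintype V] (G : SimpleGraph V) (F : Set (Sym2 V)) (v : V) :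
    degN G v ≤ degN (G.deleteEdges F) v + F.ncard := by
  have h1 : degN G v ≤ degN (G.deleteEdges F) v + (G.neighborSet v ∩ {z | s(v, z) ∈ F}).ncard := by
    unfold degN
    rw [neighborSet_del]
    have := Set.ncard_le_ncard_diff_add_ncard (G.neighborSet v)
      (G.neighborSet v ∩ {z | s(v, z) ∈ F}) (Set.toFinite _)
    calc (G.neighborSet v).ncard
        ≤ (G.neighborSet v \ (G.neighborSet v ∩ {z | s(v, z) ∈ F})).ncard
            + (G.neighborSet v ∩ {z | s(v, z) ∈ F}).ncard := this
      _ = (G.neighborSet v \ {z | s(v, z) ∈ F}).ncard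
            + (G.neighborSet v ∩ {z | s(v, z) ∈ F}).ncard := by
            rw [Set.inter_comm, Set.diff_inter_self_eq_diff]
  refine h1.trans (Nat.add_le_add_left (ncard_le_of_image_subset (v := v) ?_) _)
  rintro e ⟨z, hz, rfl⟩
  exact hz.2

lemma exists_nbr [Fintype V] (h : 1 ≤ degN G v) : ∃ w, G.Adj v w := by
  obtain ⟨w, hw⟩ := Set.nonempty_of_ncard_ne_zero (by omega : degN G v ≠ 0)
  exact ⟨w, hw⟩

lemma minDeg_le (G : SimpleGraph V) (v : V) : minDeg G ≤ degN G v := Nat.sInf_le ⟨v, rfl⟩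

lemma F_eq_incident [Fintype V] (hF : F ⊆ G.edgeSet) (hd' : degN (G.deleteEdges F) v ≤ 1)
    (hdegv : F.ncard + 1 ≤ degN G v) : ∀ e ∈ F, v ∈ e := by
  set D : Set V := G.neighborSet v \ (G.deleteEdges F).neighborSet v with hD
  have hsub : (G.deleteEdges F).neighborSet v ⊆ G.neighborSet v := by
    intro z hz
    rw [neighborSet_del] at hz
    exact hz.1
  have hDcard : D.ncard = degN G v - degN (G.deleteEdges F) v :=
    Set.ncard_diff hsub (Set.toFinite _)
  have hIm : (fun z => s(v, z)) '' D ⊆ F := by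
    rintro e ⟨z, hz, rfl⟩
    rw [hD, neighborSet_del] at hz
    simp only [Set.mem_diff, Set.mem_setOf_eq, not_and, not_not] at hz
    exact hz.2 hz.1
  have hcard : F.ncard ≤ ((fun z => s(v, z)) '' D).ncard := by
    rw [Set.ncard_image_of_injOn (Function.Injective.injOn (sym2_left_injective v)), hDcard]
    omega
  have hEq : (fun z => s(v, z)) '' D = F :=
    Set.eq_of_subset_of_ncard_le hIm hcard (Set.toFinite F)
  intro e he
  rw [← hEq] at he
  obtain ⟨z, -, rfl⟩ := he
  exact Sym2.mem_mk_left v z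

lemma mem_pair_left : x ∈ ({x, y} : Set V) := Set.mem_insert x {y}
lemma mem_pair_right : y ∈ ({x, y} : Set V) := Set.mem_insert_iff.mpr (Or.inr rfl)

lemma bd_pair (h : G.Adj x y) :
    SLbd G {x, y} = (fun z => s(x, z)) '' (G.neighborSet x \ {y})
      ∪ (fun z => s(y, z)) '' (G.neighborSet y \ {x}) := by
  ext e
  constructor
  · intro he
    obtain ⟨a, b, ha, hb, hab, rfl⟩ := bd_cases he
    simp only [Set.mem_insert_iff, Set.mem_singleton_iff] at ha hb
    push_neg at hb
    rcases ha with rfl | rfl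
    · exact Or.inl ⟨b, ⟨hab, hb.2⟩, rfl⟩
    · exact Or.inr ⟨b, ⟨hab, hb.1⟩, rfl⟩
  · rintro (⟨z, ⟨hz, hzy⟩, rfl⟩ | ⟨z, ⟨hz, hzx⟩, rfl⟩)
    · refine adj_mem_bd hz mem_pair_left ?_
      simp only [Set.mem_insert_iff, Set.mem_singleton_iff]
      push_neg
      exact ⟨(G.ne_of_adj hz).symm, hzy⟩
    · refine adj_mem_bd hz mem_pair_right ?_
      simp only [Set.mem_insert_iff, Set.mem_singleton_iff]
      push_neg
      exact ⟨hzx, (G.ne_of_adj hz).symm⟩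

lemma dOut_pair [Fintype V] (h : G.Adj x y) : dOut G {x, y} = degN G x + degN G y - 2 := by
  rw [dOut_eq_bd, bd_pair h]
  have hdisj : Disjoint ((fun z => s(x, z)) '' (G.neighborSet x \ {y}))
      ((fun z => s(y, z)) '' (G.neighborSet y \ {x})) := by
    rw [Set.disjoint_left]
    rintro e ⟨z, ⟨hz, hzy⟩, rfl⟩ ⟨w, ⟨hw, hwx⟩, he⟩
    rw [Sym2.eq_iff] at he
    rcases he with ⟨h1, h2⟩ | ⟨h1, h2⟩
    · exact h.ne h1.symm
    · exact hzy (Set.mem_singleton_iff.mpr h1.symm)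
  rw [Set.ncard_union_eq hdisj (Set.toFinite _) (Set.toFinite _),
    Set.ncard_image_of_injOn (Function.Injective.injOn (sym2_left_injective x)),
    Set.ncard_image_of_injOn (Function.Injective.injOn (sym2_left_injective y))]
  have hy : ({y} : Set V) ⊆ G.neighborSet x := Set.singleton_subset_iff.mpr h
  have hx : ({x} : Set V) ⊆ G.neighborSet y := Set.singleton_subset_iff.mpr h.symm
  have e1 : (G.neighborSet x \ {y}).ncard = degN G x - ({y} : Set V).ncard :=
    Set.ncard_diff hy (Set.toFinite _)
  have e2 : (G.neighborSet y \ {x}).ncard = degN G y - ({x} : Set V).ncard :=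
    Set.ncard_diff hx (Set.toFinite _)
  have e3 : ({y} : Set V).ncard = 1 := Set.ncard_singleton y
  have e4 : ({x} : Set V).ncard = 1 := Set.ncard_singleton x
  have h1 : 1 ≤ degN G x :=
    Nat.one_le_iff_ne_zero.mpr (Set.ncard_ne_zero_of_mem h (Set.toFinite _))
  have h2 : 1 ≤ degN G y :=
    Nat.one_le_iff_ne_zero.mpr (Set.ncard_ne_zero_of_mem h.symm (Set.toFinite _))
  rw [e1, e2, e3, e4]
  omega

lemma bd_del (G : SimpleGraph V) (F : Set (Sym2 V)) (X : Set V) :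
    SLbd (G.deleteEdges F) X = SLbd G X \ F := by
  ext e
  simp only [SLbd, Set.mem_setOf_eq, Set.mem_diff, edgeSet_deleteEdges]
  tauto

lemma dOut_del_ge [Fintype V] (G : SimpleGraph V) (F : Set (Sym2 V)) (X : Set V) :
    dOut G X ≤ dOut (G.deleteEdges F) X + F.ncard := by
  rw [dOut_eq_bd, dOut_eq_bd, bd_del]
  exact Set.ncard_le_ncard_diff_add_ncard _ _ (Set.toFinite _)

lemma dOut_del_lt [Fintype V] {e : Sym2 V} (he : e ∈ F) (hb : e ∈ SLbd G X) :
    dOut (G.deleteEdges F) X + 1 ≤ dOut G X := by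
  rw [dOut_eq_bd, dOut_eq_bd, bd_del]
  have hss : SLbd G X \ F ⊂ SLbd G X := ⟨Set.diff_subset, fun hsub => (hsub hb).2 he⟩
  have := Set.ncard_lt_ncard hss (Set.toFinite _)
  omega

lemma pair_induce_connected (h : G.Adj x y) : (G.induce {x, y}).Connected := by
  rw [connected_iff]
  refine ⟨?_, ⟨⟨x, mem_pair_left⟩⟩⟩
  have hx : ∀ a : ({x, y} : Set V), (G.induce {x, y}).Reachable ⟨x, mem_pair_left⟩ a := by
    rintro ⟨a, ha⟩
    rcases ha with ha | ha
    · subst ha; rfl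
    · refine Adj.reachable ?_
      show G.Adj x a
      rw [Set.mem_singleton_iff.mp ha]
      exact h
  intro a b
  exact (hx a).symm.trans (hx b)

lemma pair_of_induce [Fintype V] {X : Set V} (h2 : X.ncard = 2) (hc : (G.induce X).Connected) :
    ∃ x y, x ≠ y ∧ X = {x, y} ∧ G.Adj x y := by
  obtain ⟨x, y, hne, rfl⟩ := Set.ncard_eq_two.mp h2
  refine ⟨x, y, hne, rfl, ?_⟩
  have hr : (G.induce ({x, y} : Set V)).Reachable ⟨x, mem_pair_left⟩ ⟨y, mem_pair_right⟩ :=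
    hc.preconnected _ _
  obtain ⟨u, hu, -⟩ := first_step hr (fun hEq => hne (congrArg Subtype.val hEq))
  have hadj : G.Adj x u.1 := hu
  obtain ⟨uv, huv⟩ := u
  rcases huv with huv | huv
  · subst huv; exact absurd hadj (G.irrefl)
  · rw [Set.mem_singleton_iff] at huv
    subst huv; exact hadj

lemma one_lt_ncard_of_subset {B S : Set V} [Fintype V] (h : B ⊆ S) (h2 : 2 ≤ B.ncard) :
    1 < S.ncard := by
  obtain ⟨a, ha, b, hb, hne⟩ := (Set.one_lt_ncard (Set.toFinite B)).mp (by omega)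
  have := two_le_ncard_of_mem (h ha) (h hb) hne
  omega

lemma supp_eq_singleton_of_le_one [Fintype V] {G : SimpleGraph V} {c : G.ConnectedComponent}
    {v : V} (hv : v ∈ c.supp) (h : c.supp.ncard ≤ 1) : c.supp = {v} := by
  have hpos : c.supp.ncard ≠ 0 := Set.ncard_ne_zero_of_mem hv (Set.toFinite _)
  obtain ⟨a, ha⟩ := Set.ncard_eq_one.mp (show c.supp.ncard = 1 by omega)
  rw [ha] at hv ⊢
  rw [Set.mem_singleton_iff] at hv
  rw [hv]

lemma del_connected [Fintype V] {G : SimpleGraph V} {F : Set (Sym2 V)}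
    (hconn : G.Connected) (hFE : F ⊆ G.edgeSet)
    (hlt : F.ncard < lambdaH G 1) (hdeg : ∀ v, F.ncard + 1 ≤ degN G v) :
    (G.deleteEdges F).Connected := by
  by_contra hnc
  by_cases hall : ∀ c : (G.deleteEdges F).ConnectedComponent, 1 < c.supp.ncard
  · have : lambdaH G 1 ≤ F.ncard := Nat.sInf_le ⟨F, ⟨hFE, hnc, hall⟩, rfl⟩
    omega
  · push_neg at hall
    obtain ⟨c, hc⟩ := hall
    obtain ⟨v, hvc⟩ := c.exists_rep
    have hvmem : v ∈ c.supp := by rw [ConnectedComponent.mem_supp_iff]; exact hvc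
    have hsupp := supp_eq_singleton_of_le_one hvmem (by omega)
    have himg : (fun z => s(v, z)) '' (G.neighborSet v) ⊆ F := by
      rintro e ⟨z, hz, rfl⟩
      by_contra hzF
      have hadj : (G.deleteEdges F).Adj v z := by
        rw [deleteEdges_adj]; exact ⟨hz, hzF⟩
      have hmem := supp_closed hvmem hadj
      rw [hsupp] at hmem
      exact (G.ne_of_adj hz) (Set.mem_singleton_iff.mp hmem).symm
    have h1 := ncard_le_of_image_subset himg
    have h2 := hdeg v
    unfold degN at h2
    omega

lemma no_star [Fintype V] {G : SimpleGraph V} {F : Set (Sym2 V)}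
    (hFE : F ⊆ G.edgeSet) (hf1 : 1 ≤ F.ncard)
    (hdeg : ∀ v, F.ncard + 1 ≤ degN G v) (n6 : 6 ≤ (Set.univ : Set V).ncard) :
    ∀ c : V, ∃ v, v ≠ c ∧ 2 ≤ degN (G.deleteEdges F) v := by
  intro c
  by_contra hx
  push_neg at hx
  obtain ⟨v₁, hv₁⟩ := exists_notMem_of_ncard_lt (S := {c})
    (by rw [Set.ncard_singleton]; omega)
  obtain ⟨v₂, hv₂⟩ := exists_notMem_of_ncard_lt (S := {c, v₁}) (by
    have h1 := Set.ncard_insert_le c ({v₁} : Set V)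
    rw [Set.ncard_singleton] at h1
    omega)
  obtain ⟨v₃, hv₃⟩ := exists_notMem_of_ncard_lt (S := {c, v₁, v₂}) (by
    have h1 := Set.ncard_insert_le c ({v₁, v₂} : Set V)
    have h2 := Set.ncard_insert_le v₁ ({v₂} : Set V)
    rw [Set.ncard_singleton] at h2
    omega)
  rw [Set.mem_singleton_iff] at hv₁
  simp only [Set.mem_insert_iff, Set.mem_singleton_iff] at hv₂ hv₃
  push_neg at hv₂ hv₃
  obtain ⟨e, he⟩ := Set.nonempty_of_ncard_ne_zero (by omega : F.ncard ≠ 0)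
  have key : ∀ v, v ≠ c → v ∈ e := by
    intro v hvc
    exact F_eq_incident hFE (by have := hx v hvc; omega) (by have := hdeg v; omega) e he
  induction e using Sym2.ind with | _ a b =>
  have k1 := Sym2.mem_iff.mp (key v₁ hv₁)
  have k2 := Sym2.mem_iff.mp (key v₂ hv₂.1)
  have k3 := Sym2.mem_iff.mp (key v₃ hv₃.1)
  rcases k1 with rfl | rfl <;> rcases k2 with rfl | rfl <;> rcases k3 with rfl | rfl <;>
    simp_all

lemma xiH_del_le [Fintype V] {G : SimpleGraph V} {F : Set (Sym2 V)}
    (hFE : F ⊆ G.edgeSet) (hf1 : 1 ≤ F.ncard)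
    (hdeg' : ∀ v, 1 ≤ degN (G.deleteEdges F) v)
    (hξpair : ∀ a b, G.Adj a b → degN G a + degN G b - 2 = xiEdge G) :
    xiH (G.deleteEdges F) 1 + 1 ≤ xiEdge G := by
  obtain ⟨e, he⟩ := Set.nonempty_of_ncard_ne_zero (by omega : F.ncard ≠ 0)
  induction e using Sym2.ind with | _ u v =>
  have huv : G.Adj u v := G.mem_edgeSet.mp (hFE he)
  obtain ⟨w, hw⟩ := exists_nbr (hdeg' u)
  have hw' := deleteEdges_adj.mp hw
  have hwG : G.Adj u w := hw'.1
  have hwv : w ≠ v := by rintro rfl; exact hw'.2 he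
  have hbd : s(u, v) ∈ SLbd G {u, w} := by
    refine adj_mem_bd huv mem_pair_left ?_
    simp only [Set.mem_compl_iff, Set.mem_insert_iff, Set.mem_singleton_iff]
    push_neg
    exact ⟨huv.ne', hwv.symm⟩
  have hlt := dOut_del_lt he hbd
  have hval : dOut G {u, w} = xiEdge G := by rw [dOut_pair hwG]; exact hξpair u w hwG
  have hle : xiH (G.deleteEdges F) 1 ≤ dOut (G.deleteEdges F) {u, w} :=
    Nat.sInf_le ⟨{u, w}, by rw [Set.ncard_pair (G.ne_of_adj hwG)], pair_induce_connected hw, rfl⟩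
  omega

lemma cut_has_pair_comp [Fintype V] {G : SimpleGraph V} {F : Set (Sym2 V)}
    (hFE : F ⊆ G.edgeSet)
    (hgap : xiEdge G + F.ncard ≤ lambdaH G 2)
    (hxi' : xiH (G.deleteEdges F) 1 + 1 ≤ xiEdge G)
    {F' : Set (Sym2 V)} (hcut : IsExtraEdgeCut (G.deleteEdges F) 1 F')
    (hsize : F'.ncard ≤ xiH (G.deleteEdges F) 1) :
    ∃ c : ((G.deleteEdges F).deleteEdges F').ConnectedComponent, c.supp.ncard = 2 := by
  by_contra hno
  push_neg at hno
  have hcut2 : IsExtraEdgeCut G 2 (F ∪ F') := by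
    refine ⟨Set.union_subset hFE (hcut.1.trans (by
      rw [edgeSet_deleteEdges]; exact Set.diff_subset)), ?_, ?_⟩
    · rw [← deleteEdges_deleteEdges]; exact hcut.2.1
    · rw [← deleteEdges_deleteEdges]
      intro c
      have h1 := hcut.2.2 c
      have h2 := hno c
      omega
  have hl2 : lambdaH G 2 ≤ (F ∪ F').ncard := Nat.sInf_le ⟨F ∪ F', hcut2, rfl⟩
  have hun := Set.ncard_union_le F F'
  omega

lemma mem_pair_iff {v : V} : v ∈ ({x, y} : Set V) ↔ v = x ∨ v = y := by
  simp [Set.mem_insert_iff, Set.mem_singleton_iff]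

lemma partition_cut [Fintype V] {H₀ : SimpleGraph V} {x y : V} {A : Set V}
    (hxd : dOut H₀ {x, y} = xiH H₀ 1)
    (hNbr : ∀ v, v ∉ ({x, y} : Set V) → ∀ w, H₀.Adj v w → w ∈ ({x, y} : Set V))
    (hxA : x ∈ A) (hyA : y ∉ A)
    (hA : ∀ v ∈ A, v ≠ x → (v ∉ ({x, y} : Set V) ∧ H₀.Adj v x))
    (hB : ∀ v, v ∉ A → v ∉ ({x, y} : Set V) → H₀.Adj v y)
    (hA2 : ∃ v ∈ A, v ≠ x) (hB2 : ∃ v, v ∉ A ∧ v ∉ ({x, y} : Set V)) :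
    ∃ F', IsExtraEdgeCut H₀ 1 F' ∧ F'.ncard ≤ xiH H₀ 1 := by
  obtain ⟨u, huA, hux⟩ := hA2
  obtain ⟨u', hu'A, hu'X⟩ := hB2
  have huX : u ∉ ({x, y} : Set V) := (hA u huA hux).1
  have hu_adj : H₀.Adj u x := (hA u huA hux).2
  have hu'_adj : H₀.Adj u' y := hB u' hu'A hu'X
  set G₃ := H₀.deleteEdges (SLbd H₀ A) with hG₃
  have hclA : ∀ a b, G₃.Adj a b → a ∈ A → b ∈ A := fun a b hab ha => del_bd_closed hab ha
  have hadjx : ∀ v ∈ A, v ≠ x → G₃.Adj v x := by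
    intro v hv hvx
    rw [hG₃, deleteEdges_adj]
    exact ⟨(hA v hv hvx).2, notMem_bd_of_both hv hxA⟩
  have hadjy : ∀ v, v ∉ A → v ≠ y → G₃.Adj v y := by
    intro v hv hvy
    have hvX : v ∉ ({x, y} : Set V) := by
      rw [mem_pair_iff]
      push_neg
      exact ⟨fun h => hv (h ▸ hxA), hvy⟩
    rw [hG₃, deleteEdges_adj]
    exact ⟨hB v hv hvX, notMem_bd_of_neither hv hyA⟩
  refine ⟨SLbd H₀ A, ⟨fun e he => he.1, ?_, ?_⟩, ?_⟩
  · refine not_connected_of_not_reachable (v := x) (w := y) ?_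
    intro hr
    exact hyA (closed_walk_mem hclA hxA hr)
  · intro c
    obtain ⟨v, hvc⟩ := c.exists_rep
    have hvmem : v ∈ c.supp := by rw [ConnectedComponent.mem_supp_iff]; exact hvc
    by_cases hv : v ∈ A
    · have h1 : x ∈ c.supp := by
        by_cases hvx : v = x
        · subst hvx; exact hvmem
        · exact supp_closed hvmem (hadjx v hv hvx)
      have h2 : u ∈ c.supp := supp_closed h1 (hadjx u huA hux).symm
      have := two_le_ncard_of_mem h1 h2 (Ne.symm hux)
      omega
    · have hu'y : u' ≠ y := fun h => hu'X (mem_pair_iff.mpr (Or.inr h))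
      have h1 : y ∈ c.supp := by
        by_cases hvy : v = y
        · subst hvy; exact hvmem
        · exact supp_closed hvmem (hadjy v hv hvy)
      have h2 : u' ∈ c.supp := supp_closed h1 (hadjy u' hu'A hu'y).symm
      have := two_le_ncard_of_mem h1 h2 (Ne.symm hu'y)
      omega
  · have claim1 : SLbd H₀ A ⊆ insert s(x, y) (SLbd H₀ {x, y}) := by
      intro e he
      obtain ⟨a, b, haA, hbA, hab, rfl⟩ := bd_cases he
      by_cases hax : a = x
      · subst hax
        by_cases hby : b = y
        · subst hby; exact Set.mem_insert _ _
        · refine Set.mem_insert_of_mem _ (adj_mem_bd hab mem_pair_left ?_)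
          rw [mem_pair_iff]
          push_neg
          exact ⟨hab.ne', hby⟩
      · have haX : a ∉ ({x, y} : Set V) := (hA a haA hax).1
        have hbX : b ∈ ({x, y} : Set V) := hNbr a haX b hab
        refine Set.mem_insert_of_mem _ ?_
        rw [Sym2.eq_swap]
        exact adj_mem_bd hab.symm hbX haX
    have claim2 : s(x, u) ∉ SLbd H₀ A := notMem_bd_of_both hxA huA
    have claim3 : s(x, u) ∈ insert s(x, y) (SLbd H₀ {x, y}) :=
      Set.mem_insert_of_mem _ (adj_mem_bd hu_adj.symm mem_pair_left huX)
    have hins : insert s(x, u) (SLbd H₀ A) ⊆ insert s(x, y) (SLbd H₀ {x, y}) := by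
      intro e he
      rcases Set.mem_insert_iff.mp he with rfl | he'
      · exact claim3
      · exact claim1 he'
    have hxyn : s(x, y) ∉ SLbd H₀ {x, y} := notMem_bd_of_both mem_pair_left mem_pair_right
    have h1 : (insert s(x, u) (SLbd H₀ A)).ncard = (SLbd H₀ A).ncard + 1 :=
      Set.ncard_insert_of_notMem claim2 (Set.toFinite _)
    have h2 : (insert s(x, y) (SLbd H₀ {x, y})).ncard = (SLbd H₀ {x, y}).ncard + 1 :=
      Set.ncard_insert_of_notMem hxyn (Set.toFinite _)
    have h3 := Set.ncard_le_ncard hins (Set.toFinite _)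
    rw [← hxd, dOut_eq_bd]
    omega

lemma exists_good_cut [Fintype V] {H₀ : SimpleGraph V}
    (hconn : H₀.Connected)
    (hdeg1 : ∀ v, 1 ≤ degN H₀ v)
    (hstar : ∀ c : V, ∃ v, v ≠ c ∧ 2 ≤ degN H₀ v)
    (n6 : 6 ≤ (Set.univ : Set V).ncard) :
    ∃ F', IsExtraEdgeCut H₀ 1 F' ∧ F'.ncard ≤ xiH H₀ 1 := by
  have hedge : ∃ a b, H₀.Adj a b := by
    obtain ⟨p, -, q, -, hpq⟩ := (Set.one_lt_ncard (Set.toFinite _)).mp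
      (show 1 < (Set.univ : Set V).ncard by omega)
    obtain ⟨r, hr, -⟩ := first_step (hconn.preconnected p q) hpq
    exact ⟨p, r, hr⟩
  obtain ⟨p, q, hpq⟩ := hedge
  have hSne : {k | ∃ X : Set V, X.ncard = 1 + 1 ∧ (H₀.induce X).Connected ∧
      dOut H₀ X = k}.Nonempty :=
    ⟨dOut H₀ {p, q}, {p, q}, by rw [Set.ncard_pair hpq.ne], pair_induce_connected hpq, rfl⟩
  obtain ⟨X, hX2, hXc, hXd⟩ := Nat.sInf_mem hSne
  obtain ⟨x, y, hxyne, rfl, hxy⟩ := pair_of_induce hX2 hXc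
  have hXd : dOut H₀ {x, y} = xiH H₀ 1 := hXd
  set K := SLbd H₀ {x, y} with hK
  set H := H₀.deleteEdges K with hH
  have hclX : ∀ a b, H.Adj a b → a ∈ ({x, y} : Set V) → b ∈ ({x, y} : Set V) :=
    fun a b hab ha => del_bd_closed hab ha
  have hsingle : ∀ v, v ∉ ({x, y} : Set V) → (H.connectedComponentMk v).supp.ncard ≤ 1 →
      ∀ w, H₀.Adj v w → w ∈ ({x, y} : Set V) := by
    intro v hvX h1 w hw
    by_contra hwX
    have hadjH : H.Adj v w := by
      rw [hH, deleteEdges_adj]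
      exact ⟨hw, notMem_bd_of_neither hvX hwX⟩
    have hsupp := supp_eq_singleton_of_le_one (mem_supp_self H v) h1
    have hmem := supp_closed (mem_supp_self H v) hadjH
    rw [hsupp] at hmem
    exact H₀.irrefl ((Set.mem_singleton_iff.mp hmem) ▸ hw)
  have hXsupp : (H.connectedComponentMk x).supp = {x, y} := by
    refine comp_supp_eq_of_closed mem_pair_left hclX ?_
    intro w hw
    rcases mem_pair_iff.mp hw with rfl | rfl
    · exact Reachable.refl _
    · refine Adj.reachable ?_
      rw [hH, deleteEdges_adj]
      exact ⟨hxy, notMem_bd_of_both mem_pair_left mem_pair_right⟩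
  by_cases hbig : ∃ v, v ∉ ({x, y} : Set V) ∧ 2 ≤ (H.connectedComponentMk v).supp.ncard
  · -- Case 1 : a big component away from X
    obtain ⟨v₀, hv₀X, hv₀2⟩ := hbig
    set B := (H.connectedComponentMk v₀).supp with hB
    have hv₀B : v₀ ∈ B := mem_supp_self H v₀
    have hBX : ∀ w ∈ B, w ∉ ({x, y} : Set V) := by
      intro w hwB hwX
      have h1 : H.connectedComponentMk w = H.connectedComponentMk v₀ :=
        (ConnectedComponent.mem_supp_iff _ _).mp hwB
      have h2 : H.connectedComponentMk w = H.connectedComponentMk x :=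
        (ConnectedComponent.mem_supp_iff _ _).mp (by rw [hXsupp]; exact hwX)
      have : v₀ ∈ (H.connectedComponentMk x).supp :=
        (ConnectedComponent.mem_supp_iff _ _).mpr (h1.symm.trans h2)
      rw [hXsupp] at this
      exact hv₀X this
    have hsubK : SLbd H₀ B ⊆ K := by
      intro e he
      obtain ⟨a, b, haB, hbB, hab, rfl⟩ := bd_cases he
      by_contra heK
      have hadjH : H.Adj a b := by rw [hH, deleteEdges_adj]; exact ⟨hab, heK⟩
      exact hbB (supp_closed haB hadjH)
    set G₂ := H₀.deleteEdges (SLbd H₀ B) with hG₂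
    have hHle : H ≤ G₂ := by rw [hH, hG₂, hK]; exact del_anti hsubK
    refine ⟨SLbd H₀ B, ⟨fun e he => he.1, ?_, ?_⟩, ?_⟩
    · refine not_connected_of_not_reachable (v := v₀) (w := x) ?_
      intro hr
      have : x ∈ B := closed_walk_mem (fun a b hab ha => del_bd_closed hab ha) hv₀B hr
      exact hBX x this mem_pair_left
    · intro c
      obtain ⟨v, hvc⟩ := c.exists_rep
      have hvmem : v ∈ c.supp := by rw [ConnectedComponent.mem_supp_iff]; exact hvc
      have hsub : (H.connectedComponentMk v).supp ⊆ c.supp := by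
        intro w hw
        exact reachable_supp hvmem (reachable_of_mem_supp (supp_subset_of_le hHle v hw))
      by_cases hv : v ∈ ({x, y} : Set V)
      · have heq : H.connectedComponentMk v = H.connectedComponentMk x :=
          (ConnectedComponent.mem_supp_iff _ _).mp (by rw [hXsupp]; exact hv)
        have hxs : x ∈ c.supp := hsub (by rw [heq, hXsupp]; exact mem_pair_left)
        have hys : y ∈ c.supp := hsub (by rw [heq, hXsupp]; exact mem_pair_right)
        have := two_le_ncard_of_mem hxs hys hxyne
        omega
      · by_cases hv2 : 2 ≤ (H.connectedComponentMk v).supp.ncard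
        · have := one_lt_ncard_of_subset hsub hv2
          omega
        · obtain ⟨w, hw⟩ := exists_nbr (hdeg1 v)
          have hwX : w ∈ ({x, y} : Set V) := hsingle v hv (by omega) w hw
          have hvB : v ∉ B := by
            intro hvB
            have heq : H.connectedComponentMk v = H.connectedComponentMk v₀ :=
              (ConnectedComponent.mem_supp_iff _ _).mp hvB
            rw [heq] at hv2
            exact hv2 hv₀2
          have hwB : w ∉ B := fun hwB => hBX w hwB hwX
          have hadj2 : G₂.Adj v w := by
            rw [hG₂, deleteEdges_adj]
            exact ⟨hw, notMem_bd_of_neither hvB hwB⟩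
          have h2 : w ∈ c.supp := supp_closed hvmem hadj2
          have := two_le_ncard_of_mem hvmem h2 hw.ne
          omega
    · have := Set.ncard_le_ncard hsubK (Set.toFinite _)
      rw [← hXd, dOut_eq_bd]
      exact this
  · -- Case 2 : all components away from X are singletons
    push_neg at hbig
    have hNbr : ∀ v, v ∉ ({x, y} : Set V) → ∀ w, H₀.Adj v w → w ∈ ({x, y} : Set V) := by
      intro v hvX w hw
      exact hsingle v hvX (by have := hbig v hvX; omega) w hw
    have hBgen : ∀ v, v ∉ ({x, y} : Set V) → ¬H₀.Adj v x → H₀.Adj v y := by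
      intro v hvX hnx
      obtain ⟨w, hw⟩ := exists_nbr (hdeg1 v)
      rcases mem_pair_iff.mp (hNbr v hvX w hw) with rfl | rfl
      · exact absurd hw hnx
      · exact hw
    by_cases hPy : ∃ z, z ∉ ({x, y} : Set V) ∧ H₀.Adj z y
    · by_cases hPne : ∃ z, z ∉ ({x, y} : Set V) ∧ H₀.Adj z x ∧ ¬H₀.Adj z y
      · obtain ⟨zp, hzpX, hzpx, hzpy⟩ := hPne
        obtain ⟨z', hz'X, hz'y⟩ := hPy
        refine partition_cut hXd hNbr
          (A := insert x {z | z ∉ ({x, y} : Set V) ∧ H₀.Adj z x ∧ ¬H₀.Adj z y})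
          (Set.mem_insert _ _) ?_ ?_ ?_ ?_ ?_
        · intro h
          rcases Set.mem_insert_iff.mp h with h | h
          · exact hxyne h.symm
          · exact h.1 mem_pair_right
        · intro v hv hvx
          rcases Set.mem_insert_iff.mp hv with rfl | h
          · exact absurd rfl hvx
          · exact ⟨h.1, h.2.1⟩
        · intro v hvA hvX
          by_cases hvx : H₀.Adj v x
          · by_contra hvy
            exact hvA (Set.mem_insert_of_mem _ ⟨hvX, hvx, hvy⟩)
          · exact hBgen v hvX hvx
        · exact ⟨zp, Set.mem_insert_of_mem _ ⟨hzpX, hzpx, hzpy⟩,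
            fun h => hzpX (mem_pair_iff.mpr (Or.inl h))⟩
        · refine ⟨z', ?_, hz'X⟩
          intro h
          rcases Set.mem_insert_iff.mp h with rfl | h
          · exact hz'X mem_pair_left
          · exact h.2.2 hz'y
      · by_cases hzx : ∃ z, z ∉ ({x, y} : Set V) ∧ H₀.Adj z x
        · obtain ⟨z₀, hz₀X, hz₀x⟩ := hzx
          refine partition_cut hXd hNbr (A := {x, z₀}) mem_pair_left ?_ ?_ ?_ ?_ ?_
          · intro h
            rcases mem_pair_iff.mp h with h | h
            · exact hxyne h.symm
            · exact hz₀X (h ▸ mem_pair_right)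
          · intro v hv hvx
            rcases mem_pair_iff.mp hv with rfl | rfl
            · exact absurd rfl hvx
            · exact ⟨hz₀X, hz₀x⟩
          · intro v hvA hvX
            by_cases hvx : H₀.Adj v x
            · by_contra hvy
              exact hPne ⟨v, hvX, hvx, hvy⟩
            · exact hBgen v hvX hvx
          · exact ⟨z₀, mem_pair_right, fun h => hz₀X (mem_pair_iff.mpr (Or.inl h))⟩
          · obtain ⟨v, hv⟩ := exists_notMem_of_ncard_lt (S := {x, y, z₀}) (by
              have h1 := Set.ncard_insert_le x ({y, z₀} : Set V)
              have h2 := Set.ncard_insert_le y ({z₀} : Set V)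
              rw [Set.ncard_singleton] at h2
              omega)
            simp only [Set.mem_insert_iff, Set.mem_singleton_iff] at hv
            push_neg at hv
            refine ⟨v, ?_, ?_⟩
            · rw [mem_pair_iff]; push_neg; exact ⟨hv.1, hv.2.2⟩
            · rw [mem_pair_iff]; push_neg; exact ⟨hv.1, hv.2.1⟩
        · exfalso
          obtain ⟨v, hvy, hv2⟩ := hstar y
          have hsubN : H₀.neighborSet v ⊆ {y} := by
            intro w hw
            rw [mem_neighborSet] at hw
            by_cases hvX : v ∈ ({x, y} : Set V)
            · obtain hv1 | hv1 := mem_pair_iff.mp hvX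
              · rw [hv1] at hw
                by_cases hwX : w ∈ ({x, y} : Set V)
                · obtain hw1 | hw1 := mem_pair_iff.mp hwX
                  · rw [hw1] at hw; exact absurd hw (H₀.irrefl)
                  · exact Set.mem_singleton_iff.mpr hw1
                · exact absurd ⟨w, hwX, hw.symm⟩ hzx
              · exact absurd hv1 hvy
            · obtain hw1 | hw1 := mem_pair_iff.mp (hNbr v hvX w hw)
              · rw [hw1] at hw; exact absurd ⟨v, hvX, hw⟩ hzx
              · exact Set.mem_singleton_iff.mpr hw1
          have hle : degN H₀ v ≤ 1 := by
            have := Set.ncard_le_ncard hsubN (Set.toFinite _)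
            rw [Set.ncard_singleton] at this
            exact this
          omega
    · exfalso
      obtain ⟨v, hvx, hv2⟩ := hstar x
      have hsubN : H₀.neighborSet v ⊆ {x} := by
        intro w hw
        rw [mem_neighborSet] at hw
        by_cases hvX : v ∈ ({x, y} : Set V)
        · obtain hv1 | hv1 := mem_pair_iff.mp hvX
          · exact absurd hv1 hvx
          · rw [hv1] at hw
            by_cases hwX : w ∈ ({x, y} : Set V)
            · obtain hw1 | hw1 := mem_pair_iff.mp hwX
              · exact Set.mem_singleton_iff.mpr hw1
              · rw [hw1] at hw; exact absurd hw (H₀.irrefl)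
            · exact absurd ⟨w, hwX, hw.symm⟩ hPy
        · obtain hw1 | hw1 := mem_pair_iff.mp (hNbr v hvX w hw)
          · exact Set.mem_singleton_iff.mpr hw1
          · rw [hw1] at hw; exact absurd ⟨v, hvX, hw⟩ hPy
      have hle : degN H₀ v ≤ 1 := by
        have := Set.ncard_le_ncard hsubN (Set.toFinite _)
        rw [Set.ncard_singleton] at this
        exact this
      omega

lemma comp_two_adj [Fintype V] {G : SimpleGraph V} {c : G.ConnectedComponent}
    (h : c.supp.ncard = 2) : ∃ a b, a ≠ b ∧ c.supp = {a, b} ∧ G.Adj a b := by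
  obtain ⟨a, b, hne, hab⟩ := Set.ncard_eq_two.mp h
  refine ⟨a, b, hne, hab, ?_⟩
  have ha : a ∈ c.supp := by rw [hab]; exact mem_pair_left
  have hc : G.connectedComponentMk a = c := (ConnectedComponent.mem_supp_iff _ _).mp ha
  exact adj_of_supp_pair (by rw [hc, hab]) hne

lemma bd_comp_subset [Fintype V] {G : SimpleGraph V} {F' : Set (Sym2 V)}
    {c : (G.deleteEdges F').ConnectedComponent} :
    SLbd G c.supp ⊆ F' := by
  intro e he
  obtain ⟨p, q, hp, hq, hadj, rfl⟩ := bd_cases he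
  by_contra heF
  exact hq (supp_closed hp (by rw [deleteEdges_adj]; exact ⟨hadj, heF⟩))

lemma six_le_card [Fintype V] {G : SimpleGraph V} (hl2 : LambdaConn G 2)
    (hconn : G.Connected) : 6 ≤ (Set.univ : Set V).ncard := by
  obtain ⟨F₂, hF₂E, hF₂nc, hF₂comp⟩ := hl2
  obtain ⟨v, w, hvw⟩ := exists_not_reachable hF₂nc hconn.nonempty
  have hne : (G.deleteEdges F₂).connectedComponentMk v ≠
      (G.deleteEdges F₂).connectedComponentMk w :=
    fun h => hvw (ConnectedComponent.exact h)
  have hdisj : Disjoint ((G.deleteEdges F₂).connectedComponentMk v).supp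
      ((G.deleteEdges F₂).connectedComponentMk w).supp := by
    rw [Set.disjoint_left]
    intro u hu1 hu2
    exact hne (((ConnectedComponent.mem_supp_iff _ _).mp hu1).symm.trans
      ((ConnectedComponent.mem_supp_iff _ _).mp hu2))
  have hcard := Set.ncard_le_ncard
    (Set.subset_univ (((G.deleteEdges F₂).connectedComponentMk v).supp ∪
      ((G.deleteEdges F₂).connectedComponentMk w).supp)) (Set.toFinite _)
  rw [Set.ncard_union_eq hdisj (Set.toFinite _) (Set.toFinite _)] at hcard
  have h1 := hF₂comp ((G.deleteEdges F₂).connectedComponentMk v)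
  have h2 := hF₂comp ((G.deleteEdges F₂).connectedComponentMk w)
  omega

lemma del_super [Fintype V] (G : SimpleGraph V)
    (hl2 : LambdaConn G 2) (hs : SuperLambda G 1)
    (hereg : ∀ x y, G.Adj x y → degN G x + degN G y - 2 = xiEdge G)
    {F : Set (Sym2 V)} (hFE : F ⊆ G.edgeSet)
    (hFm : F.ncard ≤ min (lambdaH G 2 - xiEdge G) (minDeg G - 1)) :
    SuperLambda (G.deleteEdges F) 1 := by
  obtain ⟨hconn, hlc1, hopt, hsuper⟩ := hs
  rcases Nat.eq_zero_or_pos F.ncard with hf0 | hf1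
  · have hFe : F = ∅ := (Set.ncard_eq_zero (Set.toFinite F)).mp hf0
    rw [hFe, deleteEdges_empty]
    exact ⟨hconn, hlc1, hopt, hsuper⟩
  have n6 : 6 ≤ (Set.univ : Set V).ncard := six_le_card hl2 hconn
  have hedge : ∃ a b, G.Adj a b := by
    by_contra hno
    push_neg at hno
    obtain ⟨F₁, hF₁E, hF₁nc, -⟩ := hlc1
    have hF₁e : F₁ = ∅ := by
      ext e
      simp only [Set.mem_empty_iff_false, iff_false]
      intro he
      have hee := hF₁E he
      induction e using Sym2.ind with | _ a b =>
      exact hno a b (G.mem_edgeSet.mp hee)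
    rw [hF₁e, deleteEdges_empty] at hF₁nc
    exact hF₁nc hconn
  have hξpair : ∀ a b, G.Adj a b → dOut G {a, b} = xiEdge G := fun a b h => by
    rw [dOut_pair h]; exact hereg a b h
  have hxiH1 : xiH G 1 = xiEdge G := by
    obtain ⟨a, b, hab⟩ := hedge
    have hne' : {k | ∃ X : Set V, X.ncard = 1 + 1 ∧ (G.induce X).Connected ∧
        dOut G X = k}.Nonempty :=
      ⟨_, {a, b}, by rw [Set.ncard_pair hab.ne], pair_induce_connected hab, rfl⟩
    have hmem : xiH G 1 ∈ {k | ∃ X : Set V, X.ncard = 1 + 1 ∧ (G.induce X).Connected ∧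
        dOut G X = k} := Nat.sInf_mem hne'
    obtain ⟨X, hX2, hXc, hXd⟩ := hmem
    obtain ⟨x, y, -, rfl, hxy⟩ := pair_of_induce hX2 hXc
    rw [← hXd, hξpair x y hxy]
  have hδle : F.ncard + 1 ≤ minDeg G := by
    have := hFm.trans (min_le_right _ _)
    omega
  have hgap : xiEdge G + F.ncard ≤ lambdaH G 2 := by
    have := hFm.trans (min_le_left _ _)
    omega
  have hdegG : ∀ v, F.ncard + 1 ≤ degN G v := fun v => le_trans hδle (minDeg_le G v)
  have hlamG1 : lambdaH G 1 = xiEdge G := by rw [hopt, hxiH1]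
  have hξ2δ : 2 * minDeg G ≤ xiEdge G + 2 := by
    obtain ⟨a, b, hab⟩ := hedge
    have h1 := minDeg_le G a
    have h2 := minDeg_le G b
    have h3 := hereg a b hab
    have h4 := hdegG a
    have h5 := hdegG b
    omega
  have hG'conn : (G.deleteEdges F).Connected :=
    del_connected hconn hFE (by rw [hlamG1]; omega) hdegG
  have hdeg1' : ∀ v, 1 ≤ degN (G.deleteEdges F) v := by
    intro v
    have h1 := degN_del_ge G F v
    have h2 := hdegG v
    omega
  have hstar' := no_star hFE hf1 hdegG n6
  obtain ⟨Fc, hFc_cut, hFc_le⟩ := exists_good_cut hG'conn hdeg1' hstar' n6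
  have hxi' : xiH (G.deleteEdges F) 1 + 1 ≤ xiEdge G := xiH_del_le hFE hf1 hdeg1' hereg
  have hup : lambdaH (G.deleteEdges F) 1 ≤ xiH (G.deleteEdges F) 1 :=
    le_trans (Nat.sInf_le ⟨Fc, hFc_cut, rfl⟩) hFc_le
  have hLne : {k | ∃ F', IsExtraEdgeCut (G.deleteEdges F) 1 F' ∧ F'.ncard = k}.Nonempty :=
    ⟨Fc.ncard, Fc, hFc_cut, rfl⟩
  have hLmem : lambdaH (G.deleteEdges F) 1 ∈
      {k | ∃ F', IsExtraEdgeCut (G.deleteEdges F) 1 F' ∧ F'.ncard = k} := Nat.sInf_mem hLne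
  obtain ⟨Fm, hFm_cut, hFm_card⟩ := hLmem
  have hpair2 : ∀ F' : Set (Sym2 V), IsExtraEdgeCut (G.deleteEdges F) 1 F' →
      F'.ncard ≤ xiH (G.deleteEdges F) 1 →
      ∃ c : ((G.deleteEdges F).deleteEdges F').ConnectedComponent, c.supp.ncard = 2 :=
    fun F' h1 h2 => cut_has_pair_comp hFE hgap hxi' h1 h2
  have hlow : xiH (G.deleteEdges F) 1 ≤ lambdaH (G.deleteEdges F) 1 := by
    obtain ⟨c2, hc2⟩ := hpair2 Fm hFm_cut (by rw [hFm_card]; exact hup)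
    obtain ⟨a, b, hne, hab_supp, hab⟩ := comp_two_adj hc2
    have hbd : SLbd (G.deleteEdges F) {a, b} ⊆ Fm := by
      rw [← hab_supp]; exact bd_comp_subset
    have hadj' : (G.deleteEdges F).Adj a b := (deleteEdges_adj.mp hab).1
    have h1 : xiH (G.deleteEdges F) 1 ≤ dOut (G.deleteEdges F) {a, b} :=
      Nat.sInf_le ⟨{a, b}, by rw [Set.ncard_pair hne], pair_induce_connected hadj', rfl⟩
    have h2 : dOut (G.deleteEdges F) {a, b} ≤ Fm.ncard := by
      rw [dOut_eq_bd]; exact Set.ncard_le_ncard hbd (Set.toFinite _)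
    omega
  have hopt' : lambdaH (G.deleteEdges F) 1 = xiH (G.deleteEdges F) 1 :=
    le_antisymm hup hlow
  refine ⟨hG'conn, ⟨Fc, hFc_cut⟩, hopt', ?_⟩
  intro F' hcut hsize
  obtain ⟨c, hc⟩ := hpair2 F' hcut (by rw [hsize, hopt'])
  exact ⟨c, by omega⟩


end Helpers

/-- If `G` is `λ''`-connected, super-`λ'` and edge-regular, then
`ρ'(G) ≥ min {λ''(G) - ξ(G), δ(G) - 1}`. -/
theorem stmt6 {V : Type*} [Fintype V] (G : SimpleGraph V)
    (hl2 : LambdaConn G 2) (hs : SuperLambda G 1)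
    (hereg : ∀ x y, G.Adj x y → degN G x + degN G y - 2 = xiEdge G) :
    min (lambdaH G 2 - xiEdge G) (minDeg G - 1) ≤ rhoH G 1 := by
  have hmem : min (lambdaH G 2 - xiEdge G) (minDeg G - 1) ∈
      {m : ℕ | ∀ F : Set (Sym2 V), F ⊆ G.edgeSet → F.ncard ≤ m →
        SuperLambda (G.deleteEdges F) 1} :=
    fun F hFE hFm => del_super G hl2 hs hereg hFE hFm
  have hbdd : BddAbove {m : ℕ | ∀ F : Set (Sym2 V), F ⊆ G.edgeSet → F.ncard ≤ m →
      SuperLambda (G.deleteEdges F) 1} := by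
    refine ⟨G.edgeSet.ncard, ?_⟩
    intro m hm
    by_contra hgt
    push_neg at hgt
    have hsl := hm G.edgeSet (subset_refl _) (by omega)
    have hc := hsl.1
    have n6 : 6 ≤ (Set.univ : Set V).ncard := six_le_card hl2 hs.1
    obtain ⟨p, -, q, -, hpq⟩ := (Set.one_lt_ncard (Set.toFinite _)).mp
      (show 1 < (Set.univ : Set V).ncard by omega)
    obtain ⟨r, hr, -⟩ := first_step (hc.preconnected p q) hpq
    rw [deleteEdges_adj] at hr
    exact hr.2 hr.1
  exact le_csSup hbdd hmem
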